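/- Let S and A be nonempty finite sets and let 𝒫 ⊆ Δ(S)^{S×A} be a compact (not necessarily convex) uncertainty set that is weakly s-tractable. Then for every next-state-independent r ∈ ℝ^{S×A×S} and every γ ∈ [0,1), there exists a single stationary policy π* ∈ Δ(A)^S such that for every μ ∈ Δ(S), π* maximizes the map π ↦ min_{P∈𝒫} ∑_s μ_s v^{π,P}_s over all stationary policies π ∈ Δ(A)^S. -/

import Mathlib

open scoped BigOperators

namespace RMDP

variable {S A : Type*} [Fintype S] [Fintype A]

def IsKernel (P : S → A → S → ℝ) : Prop := ∀ s a, P s a ∈ stdSimplex ℝ S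

def IsPolicy (π : S → A → ℝ) : Prop := ∀ s, π s ∈ stdSimplex ℝ A

def NextStateIndep (r : S → A → S → ℝ) : Prop :=
  ∀ (s : S) (a : A) (s' s'' : S), r s a s' = r s a s''

noncomputable def minOver {K : Type*} (K0 : Set K) (f : K → ℝ) : ℝ := sInf (f '' K0)

noncomputable def maxOver {K : Type*} (K0 : Set K) (f : K → ℝ) : ℝ := sSup (f '' K0)

noncomputable def TpiP (π : S → A → ℝ) (r : S → A → S → ℝ) (γ : ℝ)
    (P : S → A → S → ℝ) (v : S → ℝ) : S → ℝ :=
  fun s => ∑ a, π s a * ∑ s', P s a s' * (r s a s' + γ * v s')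

noncomputable def Tpi (US : Set (S → A → S → ℝ)) (π : S → A → ℝ)
    (r : S → A → S → ℝ) (γ : ℝ) (v : S → ℝ) : S → ℝ :=
  fun s => minOver US (fun P => ∑ a, π s a * ∑ s', P s a s' * (r s a s' + γ * v s'))

noncomputable def TpiHat (US : Set (S → A → S → ℝ)) (π : S → A → ℝ)
    (r : S → A → S → ℝ) (γ : ℝ) (v : S → ℝ) : S → ℝ :=
  fun s => ∑ a, π s a * minOver US (fun P => ∑ s', P s a s' * (r s a s' + γ * v s'))

noncomputable def Topt (US : Set (S → A → S → ℝ)) (r : S → A → S → ℝ) (γ : ℝ)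
    (v : S → ℝ) : S → ℝ :=
  fun s => maxOver (stdSimplex ℝ A)
    (fun p => minOver US (fun P => ∑ a, p a * ∑ s', P s a s' * (r s a s' + γ * v s')))

def IsHPolicy (π : List (S × A) → S → A → ℝ) : Prop := ∀ h s, π h s ∈ stdSimplex ℝ A

noncomputable def expRHH (π : List (S × A) → S → A → ℝ)
    (Q : List (S × A) → S → A → S → ℝ) (r : S → A → S → ℝ) :
    ℕ → List (S × A) → S → ℝ
  | 0, h, s => ∑ a, π h s a * ∑ s', Q (h ++ [(s, a)]) s a s' * r s a s'
  | (t + 1), h, s =>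
      ∑ a, π h s a * ∑ s', Q (h ++ [(s, a)]) s a s' * expRHH π Q r t (h ++ [(s, a)]) s'

noncomputable def vHH (π : List (S × A) → S → A → ℝ)
    (Q : List (S × A) → S → A → S → ℝ) (r : S → A → S → ℝ) (γ : ℝ) (s : S) : ℝ :=
  ∑' t : ℕ, γ ^ t * expRHH π Q r t [] s

def STractable (US : Set (S → A → S → ℝ)) : Prop :=
  ∀ π : S → A → ℝ, IsPolicy π →
    ∀ (r : S → A → S → ℝ) (γ : ℝ), 0 ≤ γ → γ < 1 →
      ∀ v : (S → A → S → ℝ) → S → ℝ, (∀ P ∈ US, TpiP π r γ P (v P) = v P) →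
        ∀ u : S → ℝ, Tpi US π r γ u = u →
          ∀ μ ∈ stdSimplex ℝ S,
            minOver US (fun P => ∑ s, μ s * v P s) = ∑ s, μ s * u s

def SATractable (US : Set (S → A → S → ℝ)) : Prop :=
  ∀ π : S → A → ℝ, IsPolicy π →
    ∀ (r : S → A → S → ℝ) (γ : ℝ), 0 ≤ γ → γ < 1 →
      ∀ v : (S → A → S → ℝ) → S → ℝ, (∀ P ∈ US, TpiP π r γ P (v P) = v P) →
        ∀ uhat : S → ℝ, TpiHat US π r γ uhat = uhat →
          ∀ μ ∈ stdSimplex ℝ S,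
            minOver US (fun P => ∑ s, μ s * v P s) = ∑ s, μ s * uhat s

def WeakSTractable (US : Set (S → A → S → ℝ)) : Prop :=
  ∀ π : S → A → ℝ, IsPolicy π →
    ∀ (r : S → A → S → ℝ), NextStateIndep r → ∀ γ : ℝ, 0 ≤ γ → γ < 1 →
      ∀ v : (S → A → S → ℝ) → S → ℝ, (∀ P ∈ US, TpiP π r γ P (v P) = v P) →
        ∀ u : S → ℝ, Tpi US π r γ u = u →
          ∀ μ ∈ stdSimplex ℝ S,
            minOver US (fun P => ∑ s, μ s * v P s) = ∑ s, μ s * u s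

def WeakSATractable (US : Set (S → A → S → ℝ)) : Prop :=
  ∀ π : S → A → ℝ, IsPolicy π →
    ∀ (r : S → A → S → ℝ), NextStateIndep r → ∀ γ : ℝ, 0 ≤ γ → γ < 1 →
      ∀ v : (S → A → S → ℝ) → S → ℝ, (∀ P ∈ US, TpiP π r γ P (v P) = v P) →
        ∀ uhat : S → ℝ, TpiHat US π r γ uhat = uhat →
          ∀ μ ∈ stdSimplex ℝ S,
            minOver US (fun P => ∑ s, μ s * v P s) = ∑ s, μ s * uhat s

def SSPs (US : Set (S → A → S → ℝ)) : Prop :=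
  ∀ V : S → A → S → ℝ, ∃ Pstar ∈ US, ∀ s : S, ∀ P ∈ US,
    (∑ a, ∑ s', Pstar s a s' * V s a s') ≤ ∑ a, ∑ s', P s a s' * V s a s'

def SSPsa (US : Set (S → A → S → ℝ)) : Prop :=
  ∀ V : S → A → S → ℝ, ∃ Pstar ∈ US, ∀ (s : S) (a : A), ∀ P ∈ US,
    (∑ s', Pstar s a s' * V s a s') ≤ ∑ s', P s a s' * V s a s'

def WeakSSPs (US : Set (S → A → S → ℝ)) : Prop :=
  ∀ π : S → A → ℝ, IsPolicy π → ∀ V : S → ℝ, ∃ Pstar ∈ US, ∀ s : S, ∀ P ∈ US,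
    (∑ a, π s a * ∑ s', Pstar s a s' * V s') ≤ ∑ a, π s a * ∑ s', P s a s' * V s'

def WeakSSPsa (US : Set (S → A → S → ℝ)) : Prop :=
  ∀ V : S → ℝ, ∃ Pstar ∈ US, ∀ (s : S) (a : A), ∀ P ∈ US,
    (∑ s', Pstar s a s' * V s') ≤ ∑ s', P s a s' * V s'


section Aux

lemma bddBelow_image_of {K : Type*} {U : Set K} {f : K → ℝ} {c : ℝ}
    (h : ∀ x ∈ U, c ≤ f x) : BddBelow (f '' U) := by
  refine ⟨c, ?_⟩
  rintro b ⟨x, hx, rfl⟩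
  exact h x hx

lemma bddAbove_image_of {K : Type*} {U : Set K} {f : K → ℝ} {c : ℝ}
    (h : ∀ x ∈ U, f x ≤ c) : BddAbove (f '' U) := by
  refine ⟨c, ?_⟩
  rintro b ⟨x, hx, rfl⟩
  exact h x hx

lemma le_minOver {K : Type*} {U : Set K} (hU : U.Nonempty) {f : K → ℝ} {c : ℝ}
    (h : ∀ x ∈ U, c ≤ f x) : c ≤ minOver U f := by
  apply le_csInf (hU.image f)
  rintro b ⟨x, hx, rfl⟩
  exact h x hx

lemma minOver_le {K : Type*} {U : Set K} {f : K → ℝ} (hb : BddBelow (f '' U))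
    {x : K} (hx : x ∈ U) : minOver U f ≤ f x := csInf_le hb ⟨x, hx, rfl⟩

lemma minOver_le_add {K : Type*} {U : Set K} (hU : U.Nonempty) {f g : K → ℝ} {ε : ℝ}
    (hb : BddBelow (f '' U)) (h : ∀ x ∈ U, f x ≤ g x + ε) :
    minOver U f ≤ minOver U g + ε := by
  have h1 : minOver U f - ε ≤ minOver U g := by
    apply le_csInf (hU.image g)
    rintro b ⟨x, hx, rfl⟩
    have h2 : minOver U f ≤ f x := minOver_le hb hx
    have h3 := h x hx
    linarith
  linarith

lemma maxOver_le {K : Type*} {U : Set K} (hU : U.Nonempty) {f : K → ℝ} {c : ℝ}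
    (h : ∀ x ∈ U, f x ≤ c) : maxOver U f ≤ c := by
  apply csSup_le (hU.image f)
  rintro b ⟨x, hx, rfl⟩
  exact h x hx

lemma le_maxOver {K : Type*} {U : Set K} {f : K → ℝ} (hb : BddAbove (f '' U))
    {x : K} (hx : x ∈ U) : f x ≤ maxOver U f := le_csSup hb ⟨x, hx, rfl⟩

lemma maxOver_le_add {K : Type*} {U : Set K} (hU : U.Nonempty) {f g : K → ℝ} {ε : ℝ}
    (hb : BddAbove (g '' U)) (h : ∀ x ∈ U, f x ≤ g x + ε) :
    maxOver U f ≤ maxOver U g + ε := by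
  apply maxOver_le hU
  intro x hx
  have h1 := le_maxOver hb hx
  have h2 := h x hx
  linarith

lemma simplex_wsum_le {ι : Type*} [Fintype ι] {p : ι → ℝ} (hp : p ∈ stdSimplex ℝ ι)
    {x : ι → ℝ} {c : ℝ} (h : ∀ i, x i ≤ c) : ∑ i, p i * x i ≤ c := by
  calc ∑ i, p i * x i ≤ ∑ i, p i * c :=
        Finset.sum_le_sum (fun i _ => mul_le_mul_of_nonneg_left (h i) (hp.1 i))
    _ = c := by rw [← Finset.sum_mul, hp.2, one_mul]

lemma simplex_wsum_le_wsum_add {ι : Type*} [Fintype ι] {p : ι → ℝ}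
    (hp : p ∈ stdSimplex ℝ ι) {x y : ι → ℝ} {c : ℝ} (h : ∀ i, x i ≤ y i + c) :
    ∑ i, p i * x i ≤ (∑ i, p i * y i) + c := by
  have h1 : ∑ i, p i * (x i - y i) ≤ c :=
    simplex_wsum_le hp (fun i => by linarith [h i])
  have h2 : ∑ i, p i * (x i - y i) = ∑ i, p i * x i - ∑ i, p i * y i := by
    rw [← Finset.sum_sub_distrib]
    exact Finset.sum_congr rfl (fun i _ => by ring)
  linarith

lemma simplex_abs_wsum_le {ι : Type*} [Fintype ι] {p : ι → ℝ} (hp : p ∈ stdSimplex ℝ ι)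
    {x : ι → ℝ} {c : ℝ} (h : ∀ i, |x i| ≤ c) : |∑ i, p i * x i| ≤ c := by
  rw [abs_le]
  constructor
  · have h1 : ∑ i, p i * (-x i) ≤ c :=
      simplex_wsum_le hp (fun i => by have := h i; rw [abs_le] at this; linarith)
    have h2 : ∑ i, p i * (-x i) = -∑ i, p i * x i := by
      rw [← Finset.sum_neg_distrib]
      exact Finset.sum_congr rfl (fun i _ => by ring)
    linarith
  · exact simplex_wsum_le hp (fun i => (abs_le.1 (h i)).2)

lemma exists_entry_bound [Nonempty S] [Nonempty A] (r : S → A → S → ℝ) (γ : ℝ)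
    (v : S → ℝ) (s : S) :
    ∃ C : ℝ, 0 ≤ C ∧ ∀ (a : A) (s' : S), |r s a s' + γ * v s'| ≤ C := by
  refine ⟨Finset.univ.sup' Finset.univ_nonempty
      (fun q : A × S => |r s q.1 q.2 + γ * v q.2|), ?_, fun a s' => ?_⟩
  · exact le_trans (abs_nonneg (r s (Classical.arbitrary (A × S)).1 (Classical.arbitrary (A × S)).2 + γ * v (Classical.arbitrary (A × S)).2))
      (Finset.le_sup' (fun q : A × S => |r s q.1 q.2 + γ * v q.2|)
        (Finset.mem_univ (Classical.arbitrary (A × S))))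
  · exact Finset.le_sup' (fun q : A × S => |r s q.1 q.2 + γ * v q.2|)
      (Finset.mem_univ (a, s'))

lemma abs_val_le {US : Set (S → A → S → ℝ)} (hker : ∀ P ∈ US, IsKernel P)
    {r : S → A → S → ℝ} {γ : ℝ} {v : S → ℝ} {s : S} {C : ℝ}
    (hC : ∀ (a : A) (s' : S), |r s a s' + γ * v s'| ≤ C)
    {p : A → ℝ} (hp : p ∈ stdSimplex ℝ A) {P : S → A → S → ℝ} (hP : P ∈ US) :
    |∑ a, p a * ∑ s', P s a s' * (r s a s' + γ * v s')| ≤ C :=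
  simplex_abs_wsum_le hp (fun a => simplex_abs_wsum_le (hker P hP s a) (fun s' => hC a s'))

lemma wsum_step_le {r : S → A → S → ℝ} {γ : ℝ} (hγ0 : 0 ≤ γ) {p : A → ℝ}
    (hp : p ∈ stdSimplex ℝ A) {P : S → A → S → ℝ} (hP : IsKernel P)
    {v w : S → ℝ} {c : ℝ} (h : ∀ s', v s' ≤ w s' + c) (s : S) :
    ∑ a, p a * ∑ s', P s a s' * (r s a s' + γ * v s') ≤
      (∑ a, p a * ∑ s', P s a s' * (r s a s' + γ * w s')) + γ * c := by
  refine simplex_wsum_le_wsum_add hp (fun a => ?_)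
  refine simplex_wsum_le_wsum_add (hP s a) (fun s' => ?_)
  have h2 : γ * v s' ≤ γ * (w s' + c) := mul_le_mul_of_nonneg_left (h s') hγ0
  rw [mul_add] at h2
  linarith

/-- one-sided comparison for state-wise min operators -/
lemma minOver_step_le [Nonempty S] [Nonempty A] {US : Set (S → A → S → ℝ)}
    (hne : US.Nonempty) (hker : ∀ P ∈ US, IsKernel P)
    (r : S → A → S → ℝ) {γ : ℝ} (hγ0 : 0 ≤ γ) {p : A → ℝ} (hp : p ∈ stdSimplex ℝ A)
    {v w : S → ℝ} {c : ℝ} (h : ∀ s', v s' ≤ w s' + c) (s : S) :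
    minOver US (fun P => ∑ a, p a * ∑ s', P s a s' * (r s a s' + γ * v s')) ≤
      minOver US (fun P => ∑ a, p a * ∑ s', P s a s' * (r s a s' + γ * w s')) + γ * c := by
  obtain ⟨C, hC0, hC⟩ := exists_entry_bound r γ v s
  refine minOver_le_add hne (bddBelow_image_of (c := -C) (fun P hP => ?_)) (fun P hP =>
    wsum_step_le hγ0 hp (hker P hP) h s)
  have := abs_val_le hker hC hp hP
  rw [abs_le] at this
  linarith [this.1]

lemma stdSimplex_nonempty' [Nonempty A] : (stdSimplex ℝ A).Nonempty := by
  classical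
  exact ⟨_, ite_eq_mem_stdSimplex ℝ (Classical.arbitrary A)⟩

lemma bddAbove_min_image [Nonempty S] [Nonempty A] {US : Set (S → A → S → ℝ)}
    (hne : US.Nonempty) (hker : ∀ P ∈ US, IsKernel P)
    (r : S → A → S → ℝ) (γ : ℝ) (v : S → ℝ) (s : S) :
    BddAbove ((fun p : A → ℝ =>
      minOver US (fun P => ∑ a, p a * ∑ s', P s a s' * (r s a s' + γ * v s'))) ''
        stdSimplex ℝ A) := by
  obtain ⟨C, hC0, hC⟩ := exists_entry_bound r γ v s
  refine bddAbove_image_of (c := C) (fun p hp => ?_)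
  obtain ⟨P0, hP0⟩ := hne
  refine le_trans (minOver_le (bddBelow_image_of (c := -C) (fun P hP => ?_)) hP0) ?_
  · have := abs_val_le hker hC hp hP
    rw [abs_le] at this
    linarith [this.1]
  · exact (abs_le.1 (abs_val_le hker hC hp hP0)).2

/-- existence of a fixed point of `Tpi` -/
lemma tpi_exists_fixed [Nonempty S] [Nonempty A] {US : Set (S → A → S → ℝ)}
    (hne : US.Nonempty) (hker : ∀ P ∈ US, IsKernel P)
    {π : S → A → ℝ} (hπ : IsPolicy π) (r : S → A → S → ℝ) {γ : ℝ}
    (hγ0 : 0 ≤ γ) (hγ1 : γ < 1) : ∃ u : S → ℝ, Tpi US π r γ u = u := by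
  have hlip : LipschitzWith ⟨γ, hγ0⟩ (Tpi US π r γ) := by
    refine LipschitzWith.of_dist_le_mul (fun v w => ?_)
    rw [dist_pi_le_iff (by positivity)]
    intro s
    rw [Real.dist_eq, abs_le]
    have hd : ∀ s', |v s' - w s'| ≤ dist v w := by
      intro s'
      have := dist_le_pi_dist v w s'
      rwa [Real.dist_eq] at this
    constructor
    · have := minOver_step_le hne hker r hγ0 (hπ s) (v := w) (w := v)
        (c := dist v w) (fun s' => by linarith [abs_le.1 (hd s')]) s
      show -(↑(⟨γ, hγ0⟩ : NNReal) * dist v w) ≤ Tpi US π r γ v s - Tpi US π r γ w s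
      simp only [NNReal.coe_mk]
      simp only [Tpi]
      linarith
    · have := minOver_step_le hne hker r hγ0 (hπ s) (v := v) (w := w)
        (c := dist v w) (fun s' => by linarith [abs_le.1 (hd s')]) s
      show Tpi US π r γ v s - Tpi US π r γ w s ≤ ↑(⟨γ, hγ0⟩ : NNReal) * dist v w
      simp only [NNReal.coe_mk]
      simp only [Tpi]
      linarith
  have hcon : ContractingWith ⟨γ, hγ0⟩ (Tpi US π r γ) := ⟨by exact_mod_cast hγ1, hlip⟩
  exact ⟨ContractingWith.fixedPoint _ hcon, hcon.fixedPoint_isFixedPt⟩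

/-- existence of a fixed point of `Topt` -/
lemma topt_exists_fixed [Nonempty S] [Nonempty A] {US : Set (S → A → S → ℝ)}
    (hne : US.Nonempty) (hker : ∀ P ∈ US, IsKernel P) (r : S → A → S → ℝ) {γ : ℝ}
    (hγ0 : 0 ≤ γ) (hγ1 : γ < 1) : ∃ u : S → ℝ, Topt US r γ u = u := by
  have key : ∀ (v w : S → ℝ) (c : ℝ), (∀ s', v s' ≤ w s' + c) →
      ∀ s, Topt US r γ v s ≤ Topt US r γ w s + γ * c := by
    intro v w c h s
    exact maxOver_le_add stdSimplex_nonempty' (bddAbove_min_image hne hker r γ w s)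
      (fun p hp => minOver_step_le hne hker r hγ0 hp h s)
  have hlip : LipschitzWith ⟨γ, hγ0⟩ (Topt US r γ) := by
    refine LipschitzWith.of_dist_le_mul (fun v w => ?_)
    rw [dist_pi_le_iff (by positivity)]
    intro s
    rw [Real.dist_eq, abs_le]
    have hd : ∀ s', |v s' - w s'| ≤ dist v w := by
      intro s'
      have := dist_le_pi_dist v w s'
      rwa [Real.dist_eq] at this
    constructor
    · have := key w v (dist v w) (fun s' => by linarith [abs_le.1 (hd s')]) s
      show -(↑(⟨γ, hγ0⟩ : NNReal) * dist v w) ≤ Topt US r γ v s - Topt US r γ w s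
      simp only [NNReal.coe_mk]
      linarith
    · have := key v w (dist v w) (fun s' => by linarith [abs_le.1 (hd s')]) s
      show Topt US r γ v s - Topt US r γ w s ≤ ↑(⟨γ, hγ0⟩ : NNReal) * dist v w
      simp only [NNReal.coe_mk]
      linarith
  have hcon : ContractingWith ⟨γ, hγ0⟩ (Topt US r γ) := ⟨by exact_mod_cast hγ1, hlip⟩
  exact ⟨ContractingWith.fixedPoint _ hcon, hcon.fixedPoint_isFixedPt⟩

/-- a policy achieving the max in `Topt` at a given value function -/
lemma exists_max_policy [Nonempty S] [Nonempty A] {US : Set (S → A → S → ℝ)}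
    (hne : US.Nonempty) (hker : ∀ P ∈ US, IsKernel P) (r : S → A → S → ℝ) {γ : ℝ}
    (hγ0 : 0 ≤ γ) (u : S → ℝ) :
    ∃ πstar : S → A → ℝ, IsPolicy πstar ∧ Tpi US πstar r γ u = Topt US r γ u := by
  have key : ∀ s : S, ∃ p ∈ stdSimplex ℝ A, IsMaxOn
      (fun p : A → ℝ =>
        minOver US (fun P => ∑ a, p a * ∑ s', P s a s' * (r s a s' + γ * u s')))
      (stdSimplex ℝ A) p := by
    intro s
    obtain ⟨C, hC0, hC⟩ := exists_entry_bound r γ u s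
    set g : (A → ℝ) → ℝ := fun p =>
      minOver US (fun P => ∑ a, p a * ∑ s', P s a s' * (r s a s' + γ * u s')) with hg
    have hcl : ∀ (a : A) (P : S → A → S → ℝ), P ∈ US →
        |∑ s', P s a s' * (r s a s' + γ * u s')| ≤ C := fun a P hP =>
      simplex_abs_wsum_le (hker P hP s a) (fun s' => hC a s')
    have hbd : ∀ p : A → ℝ, ∀ P ∈ US,
        |∑ a, p a * ∑ s', P s a s' * (r s a s' + γ * u s')| ≤ (∑ a, |p a|) * C := by
      intro p P hP
      calc |∑ a, p a * ∑ s', P s a s' * (r s a s' + γ * u s')| ≤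
            ∑ a, |p a * ∑ s', P s a s' * (r s a s' + γ * u s')| :=
            Finset.abs_sum_le_sum_abs _ _
        _ ≤ ∑ a, |p a| * C := by
            refine Finset.sum_le_sum (fun a _ => ?_)
            rw [abs_mul]
            exact mul_le_mul_of_nonneg_left (hcl a P hP) (abs_nonneg _)
        _ = (∑ a, |p a|) * C := by rw [Finset.sum_mul]
    have hstep : ∀ p q : A → ℝ, g p ≤ g q + (Fintype.card A : ℝ) * C * dist p q := by
      intro p q
      refine minOver_le_add hne (bddBelow_image_of (c := -((∑ a, |p a|) * C))
        (fun P hP => by linarith [(abs_le.1 (hbd p P hP)).1])) (fun P hP => ?_)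
      have he : ∑ a, p a * ∑ s', P s a s' * (r s a s' + γ * u s') -
          ∑ a, q a * ∑ s', P s a s' * (r s a s' + γ * u s') =
          ∑ a, (p a - q a) * ∑ s', P s a s' * (r s a s' + γ * u s') := by
        rw [← Finset.sum_sub_distrib]
        exact Finset.sum_congr rfl (fun a _ => by ring)
      have hterm : ∀ a : A, (p a - q a) * ∑ s', P s a s' * (r s a s' + γ * u s') ≤
          dist p q * C := by
        intro a
        refine le_trans (le_abs_self _) ?_
        rw [abs_mul]
        have h1 : |p a - q a| ≤ dist p q := by
          have := dist_le_pi_dist p q a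
          rwa [Real.dist_eq] at this
        exact mul_le_mul h1 (hcl a P hP) (abs_nonneg _) dist_nonneg
      have hsum : ∑ a, (p a - q a) * ∑ s', P s a s' * (r s a s' + γ * u s') ≤
          (Fintype.card A : ℝ) * C * dist p q := by
        calc ∑ a, (p a - q a) * ∑ s', P s a s' * (r s a s' + γ * u s') ≤
              ∑ _a : A, dist p q * C := Finset.sum_le_sum (fun a _ => hterm a)
          _ = (Fintype.card A : ℝ) * (dist p q * C) := by
              rw [Finset.sum_const, Finset.card_univ, nsmul_eq_mul]
          _ = (Fintype.card A : ℝ) * C * dist p q := by ring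
      linarith [he ▸ hsum]
    have hlip : LipschitzWith ⟨(Fintype.card A : ℝ) * C, by positivity⟩ g := by
      refine LipschitzWith.of_dist_le_mul (fun p q => ?_)
      rw [Real.dist_eq, abs_le]
      have h1 := hstep p q
      have h2 := hstep q p
      rw [dist_comm q p] at h2
      constructor
      · show -(((Fintype.card A : ℝ) * C) * dist p q) ≤ g p - g q; linarith
      · show g p - g q ≤ ((Fintype.card A : ℝ) * C) * dist p q; linarith
    exact (isCompact_stdSimplex ℝ A).exists_isMaxOn stdSimplex_nonempty'
      hlip.continuous.continuousOn
  choose πstar hmem hmax using key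
  refine ⟨πstar, hmem, ?_⟩
  funext s
  have hub := hmax s
  have hgreat : IsGreatest ((fun p : A → ℝ =>
      minOver US (fun P => ∑ a, p a * ∑ s', P s a s' * (r s a s' + γ * u s'))) ''
        stdSimplex ℝ A)
      (minOver US (fun P => ∑ a, πstar s a * ∑ s', P s a s' * (r s a s' + γ * u s'))) := by
    constructor
    · exact ⟨πstar s, hmem s, rfl⟩
    · rintro b ⟨p, hp, rfl⟩
      exact hub hp
  exact (hgreat.csSup_eq).symm

end Aux

theorem stmt8 {S A : Type*} [Fintype S] [Fintype A] [Nonempty S] [Nonempty A]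
    (US : Set (S → A → S → ℝ)) (hne : US.Nonempty) (hker : ∀ P ∈ US, IsKernel P)
    (hcpt : IsCompact US) (hws : WeakSTractable US)
    (r : S → A → S → ℝ) (hr : NextStateIndep r) (γ : ℝ) (hγ0 : 0 ≤ γ) (hγ1 : γ < 1)
    (v : (S → A → ℝ) → (S → A → S → ℝ) → S → ℝ)
    (hv : ∀ π : S → A → ℝ, IsPolicy π → ∀ P ∈ US, TpiP π r γ P (v π P) = v π P) :
    ∃ πstar : S → A → ℝ, IsPolicy πstar ∧
      ∀ μ ∈ stdSimplex ℝ S, ∀ π : S → A → ℝ, IsPolicy π →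
        minOver US (fun P => ∑ s, μ s * v π P s) ≤
          minOver US (fun P => ∑ s, μ s * v πstar P s) := by
  obtain ⟨ustar, hustar⟩ := topt_exists_fixed hne hker r hγ0 hγ1
  obtain ⟨πstar, hpol, heq⟩ := exists_max_policy hne hker r hγ0 ustar
  have hfixstar : Tpi US πstar r γ ustar = ustar := heq.trans hustar
  refine ⟨πstar, hpol, ?_⟩
  intro μ hμ π hπ
  obtain ⟨u, hu⟩ := tpi_exists_fixed hne hker hπ r hγ0 hγ1
  rw [hws π hπ r hr γ hγ0 hγ1 (v π) (hv π hπ) u hu μ hμ,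
      hws πstar hpol r hr γ hγ0 hγ1 (v πstar) (hv πstar hpol) ustar hfixstar μ hμ]
  have hle : ∀ s, u s ≤ ustar s := by
    set c := max (Finset.univ.sup' Finset.univ_nonempty (fun s => u s - ustar s)) 0 with hc
    have hc0 : 0 ≤ c := le_max_right _ 0
    have h1 : ∀ s, u s ≤ ustar s + c := by
      intro s
      have ha := Finset.le_sup' (fun s => u s - ustar s) (Finset.mem_univ s)
      have hb : Finset.univ.sup' Finset.univ_nonempty (fun s => u s - ustar s) ≤ c :=
        le_max_left _ _
      linarith
    have h2 : ∀ s, u s ≤ ustar s + γ * c := by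
      intro s
      have e1 : u s = Tpi US π r γ u s := (congrFun hu s).symm
      have e2 : Tpi US π r γ u s ≤ Tpi US π r γ ustar s + γ * c :=
        minOver_step_le hne hker r hγ0 (hπ s) h1 s
      have e3 : Tpi US π r γ ustar s ≤ Topt US r γ ustar s :=
        le_maxOver (bddAbove_min_image hne hker r γ ustar s) (hπ s)
      have e4 : Topt US r γ ustar s = ustar s := congrFun hustar s
      linarith
    have h3 : c ≤ γ * c := by
      refine max_le ?_ (mul_nonneg hγ0 hc0)
      refine Finset.sup'_le _ _ (fun s _ => ?_)
      have := h2 s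
      linarith
    have hcle : c ≤ 0 := by
      rcases lt_or_ge 0 c with hpos | hneg
      · nlinarith
      · exact hneg
    intro s
    have h4 := h2 s
    have h5 : γ * c ≤ 0 := mul_nonpos_of_nonneg_of_nonpos hγ0 hcle
    linarith
  exact Finset.sum_le_sum (fun s _ => mul_le_mul_of_nonneg_left (hle s) (hμ.1 s))


end RMDP
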